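/- Let F2 be a nonempty finite subset of ℤ² and let F1 be a uniquely determined neighbour of F2. Put α = α(F2, F1). Then |F2 ∩ F1| / |F2| ≥ 1 − √2·α / √|F2|. -/

import Mathlib

open Finset

/-- The row sum `r_i(F)`: the number of elements of `F` in row `i`. -/
def rowSum (F : Finset (ℤ × ℤ)) (i : ℤ) : ℤ :=
  ((F.filter fun p => p.1 = i).card : ℤ)

/-- The column sum `c_j(F)`: the number of elements of `F` in column `j`. -/
def colSum (F : Finset (ℤ × ℤ)) (j : ℤ) : ℤ :=
  ((F.filter fun p => p.2 = j).card : ℤ)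

/-- `F` is uniquely determined by its line sums. -/
def uniquelyDetermined (F : Finset (ℤ × ℤ)) : Prop :=
  ∀ F' : Finset (ℤ × ℤ),
    (∀ i, rowSum F' i = rowSum F i) → (∀ j, colSum F' j = colSum F j) → F' = F

/-- `Σ_j |c_j(F1) − c_j(F2)| + Σ_i |r_i(F1) − r_i(F2)|`; the sums over all of `ℤ`
reduce to the finite index sets below, since all other terms vanish. -/
def lineDiff (F1 F2 : Finset (ℤ × ℤ)) : ℤ :=
  (∑ j ∈ (F1 ∪ F2).image Prod.snd, |colSum F1 j - colSum F2 j|)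
    + ∑ i ∈ (F1 ∪ F2).image Prod.fst, |rowSum F1 i - rowSum F2 i|

/-- `α(F1, F2)`. -/
noncomputable def alpha (F1 F2 : Finset (ℤ × ℤ)) : ℝ :=
  (lineDiff F1 F2 : ℝ) / 2

/-- `F1` is a uniquely determined neighbour of `F2`: `F1` is uniquely determined by
its line sums, has the same row sums as `F2` in every row, and for some `n` such that
the column sums of both `F1` and `F2` are supported in columns `1, …, n`, there is a
permutation `σ` of `{1, …, n}` ordering the column sums of `F2` non-increasingly
which also orders the column sums of `F1` non-increasingly. -/
def udNeighbour (F1 F2 : Finset (ℤ × ℤ)) : Prop :=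
  uniquelyDetermined F1 ∧ (∀ i, rowSum F1 i = rowSum F2 i) ∧
    ∃ n : ℕ,
      (∀ j : ℤ, j < 1 ∨ (n : ℤ) < j → colSum F2 j = 0) ∧
      (∀ j : ℤ, j < 1 ∨ (n : ℤ) < j → colSum F1 j = 0) ∧
      ∃ σ : Equiv.Perm (Fin n),
        (∀ k l : Fin n, k ≤ l →
          colSum F2 ((σ l : ℕ) + 1 : ℤ) ≤ colSum F2 ((σ k : ℕ) + 1 : ℤ)) ∧
        (∀ k l : Fin n, k ≤ l →
          colSum F1 ((σ l : ℕ) + 1 : ℤ) ≤ colSum F1 ((σ k : ℕ) + 1 : ℤ))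


lemma no_switch {F1 : Finset (ℤ × ℤ)} (hud : uniquelyDetermined F1)
    {i1 i2 j1 j2 : ℤ} (hi : i1 ≠ i2) (hj : j1 ≠ j2)
    (h11 : (i1, j1) ∈ F1) (h22 : (i2, j2) ∈ F1)
    (h12 : (i1, j2) ∉ F1) (h21 : (i2, j1) ∉ F1) : False := by
  set F' : Finset (ℤ × ℤ) :=
    insert (i1, j2) (insert (i2, j1) ((F1.erase (i1, j1)).erase (i2, j2))) with hF'
  have hne : ((i1, j1) : ℤ × ℤ) ≠ (i2, j2) := by simp [hi]
  have key : ∀ g : ℤ × ℤ → ℤ,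
      ∑ p ∈ F', g p = ∑ p ∈ F1, g p + g (i1, j2) + g (i2, j1) - g (i1, j1) - g (i2, j2) := by
    intro g
    have hm2 : ((i2,j2) : ℤ×ℤ) ∈ F1.erase (i1,j1) := Finset.mem_erase.2 ⟨Ne.symm hne, h22⟩
    have e1 : ∑ p ∈ (F1.erase (i1,j1)).erase (i2,j2), g p + g (i2,j2) = ∑ p ∈ F1.erase (i1,j1), g p :=
      Finset.sum_erase_add _ _ hm2
    have e2 : ∑ p ∈ F1.erase (i1,j1), g p + g (i1,j1) = ∑ p ∈ F1, g p :=
      Finset.sum_erase_add _ _ h11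
    have hn1 : ((i2,j1) : ℤ×ℤ) ∉ (F1.erase (i1,j1)).erase (i2,j2) := by
      intro h; exact h21 (Finset.mem_of_mem_erase (Finset.mem_of_mem_erase h))
    have hn2 : ((i1,j2) : ℤ×ℤ) ∉ insert (i2,j1) ((F1.erase (i1,j1)).erase (i2,j2)) := by
      intro h
      rcases Finset.mem_insert.1 h with h | h
      · exact hi (by simpa using congrArg Prod.fst h)
      · exact h12 (Finset.mem_of_mem_erase (Finset.mem_of_mem_erase h))
    rw [hF', Finset.sum_insert hn2, Finset.sum_insert hn1]
    omega
  have hrowcard : ∀ (F : Finset (ℤ×ℤ)) (i : ℤ),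
      rowSum F i = ∑ p ∈ F, if p.1 = i then (1:ℤ) else 0 := by
    intro F i
    rw [rowSum, Finset.card_filter]
    push_cast
    rfl
  have hcolcard : ∀ (F : Finset (ℤ×ℤ)) (j : ℤ),
      colSum F j = ∑ p ∈ F, if p.2 = j then (1:ℤ) else 0 := by
    intro F j
    rw [colSum, Finset.card_filter]
    push_cast
    rfl
  have hrow : ∀ i, rowSum F' i = rowSum F1 i := by
    intro i
    rw [hrowcard, hrowcard, key]
    by_cases h1 : i1 = i <;> by_cases h2 : i2 = i <;> simp [h1, h2] <;> omega
  have hcol : ∀ j, colSum F' j = colSum F1 j := by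
    intro j
    rw [hcolcard, hcolcard, key]
    by_cases h1 : j1 = j <;> by_cases h2 : j2 = j <;> simp [h1, h2] <;> omega
  have := hud F' hrow hcol
  apply h12
  rw [← this, hF']
  exact Finset.mem_insert_self _ _

lemma colSum_pos {F : Finset (ℤ × ℤ)} {i j : ℤ} (h : (i, j) ∈ F) : 0 < colSum F j := by
  have : (i,j) ∈ F.filter (fun p => p.2 = j) := Finset.mem_filter.2 ⟨h, rfl⟩
  have := Finset.card_pos.2 ⟨_, this⟩
  unfold colSum; exact_mod_cast this

lemma rowSum_pos {F : Finset (ℤ × ℤ)} {i j : ℤ} (h : (i, j) ∈ F) : 0 < rowSum F i := by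
  have : (i,j) ∈ F.filter (fun p => p.1 = i) := Finset.mem_filter.2 ⟨h, rfl⟩
  have := Finset.card_pos.2 ⟨_, this⟩
  unfold rowSum; exact_mod_cast this

lemma rowSum_nonneg (F : Finset (ℤ×ℤ)) (i : ℤ) : 0 ≤ rowSum F i := Int.natCast_nonneg _

lemma nest {F1 : Finset (ℤ × ℤ)} (hud : uniquelyDetermined F1) (j1 j2 : ℤ) :
    (∀ i, (i, j1) ∈ F1 → (i, j2) ∈ F1) ∨ (∀ i, (i, j2) ∈ F1 → (i, j1) ∈ F1) := by
  by_cases hj : j1 = j2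
  · subst hj; left; exact fun i h => h
  by_contra h
  push_neg at h
  obtain ⟨⟨i1, h11, h12⟩, ⟨i2, h22, h21⟩⟩ := h
  have hi : i1 ≠ i2 := by rintro rfl; exact h12 h22
  exact no_switch hud hi hj h11 h22 h12 h21

lemma colSum_eq_image_card (F : Finset (ℤ×ℤ)) (j : ℤ) :
    colSum F j = (((F.filter (fun p => p.2 = j)).image Prod.fst).card : ℤ) := by
  unfold colSum
  congr 1
  rw [Finset.card_image_of_injOn]
  intro p hp q hq hpq
  simp only [Finset.coe_filter, Set.mem_setOf_eq] at hp hq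
  exact Prod.ext hpq (hp.2.trans hq.2.symm)

section
variable {F1 : Finset (ℤ×ℤ)} {n : ℕ} {σ : Equiv.Perm (Fin n)}

/-- the `k`-th column in sorted order -/
def colOf (σ : Equiv.Perm (Fin n)) (k : Fin n) : ℤ := ((σ k : ℕ) : ℤ) + 1

lemma colOf_injective : Function.Injective (colOf σ) := by
  intro k l h
  unfold colOf at h
  have : (σ k : ℕ) = (σ l : ℕ) := by omega
  exact σ.injective (Fin.ext this)

lemma exists_colOf {j : ℤ} (h1 : 1 ≤ j) (h2 : j ≤ (n:ℤ)) : ∃ k : Fin n, colOf σ k = j := by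
  have hlt : (j - 1).toNat < n := by omega
  refine ⟨σ.symm ⟨(j-1).toNat, hlt⟩, ?_⟩
  unfold colOf
  rw [Equiv.apply_symm_apply]
  simp
  omega

lemma mono_mem (hud : uniquelyDetermined F1)
    (hsort1 : ∀ k l : Fin n, k ≤ l →
      colSum F1 ((σ l : ℕ) + 1 : ℤ) ≤ colSum F1 ((σ k : ℕ) + 1 : ℤ))
    {i : ℤ} {k l : Fin n} (hkl : k ≤ l) (h : (i, colOf σ l) ∈ F1) : (i, colOf σ k) ∈ F1 := by
  rcases nest hud (colOf σ l) (colOf σ k) with hn | hn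
  · exact hn i h
  · -- reverse inclusion: rows of col k ⊆ rows of col l; use card comparison
    set s := (F1.filter (fun p => p.2 = colOf σ k)).image Prod.fst with hs
    set t := (F1.filter (fun p => p.2 = colOf σ l)).image Prod.fst with ht
    have hsub : s ⊆ t := by
      intro i' hi'
      simp only [hs, Finset.mem_image, Finset.mem_filter] at hi'
      obtain ⟨p, ⟨hpF, hp2⟩, hp1⟩ := hi'
      have : (i', colOf σ k) ∈ F1 := by
        have : p = (i', colOf σ k) := Prod.ext hp1 hp2
        rwa [this] at hpF
      have := hn i' this
      simp only [ht, Finset.mem_image, Finset.mem_filter]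
      exact ⟨(i', colOf σ l), ⟨this, rfl⟩, rfl⟩
    have hcard : t.card ≤ s.card := by
      have := hsort1 k l hkl
      rw [colSum_eq_image_card, colSum_eq_image_card] at this
      have : (t.card : ℤ) ≤ (s.card : ℤ) := by
        convert this using 2 <;> simp [hs, ht, colOf] <;> congr
      exact_mod_cast this
    have hst : s = t := Finset.eq_of_subset_of_card_le hsub hcard
    have hit : i ∈ t := by
      simp only [ht, Finset.mem_image, Finset.mem_filter]
      exact ⟨(i, colOf σ l), ⟨h, rfl⟩, rfl⟩
    rw [← hst] at hit
    simp only [hs, Finset.mem_image, Finset.mem_filter] at hit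
    obtain ⟨p, ⟨hpF, hp2⟩, hp1⟩ := hit
    have : p = (i, colOf σ k) := Prod.ext hp1 hp2
    rwa [this] at hpF

lemma staircase (hud : uniquelyDetermined F1)
    (h1supp : ∀ j : ℤ, j < 1 ∨ (n : ℤ) < j → colSum F1 j = 0)
    (hsort1 : ∀ k l : Fin n, k ≤ l →
      colSum F1 ((σ l : ℕ) + 1 : ℤ) ≤ colSum F1 ((σ k : ℕ) + 1 : ℤ))
    (i : ℤ) (k : Fin n) :
    (i, colOf σ k) ∈ F1 ↔ ((k : ℕ) : ℤ) < rowSum F1 i := by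
  classical
  set K : Finset (Fin n) := Finset.univ.filter (fun k => (i, colOf σ k) ∈ F1) with hK
  have hdc : ∀ {k l : Fin n}, k ≤ l → l ∈ K → k ∈ K := by
    intro k l hkl hl
    simp only [hK, Finset.mem_filter, Finset.mem_univ, true_and] at hl ⊢
    exact mono_mem hud hsort1 hkl hl
  have hcardK : (K.card : ℤ) = rowSum F1 i := by
    unfold rowSum
    norm_cast
    apply Finset.card_bij (fun k _ => (i, colOf σ k))
    · intro k hk
      simp only [hK, Finset.mem_filter, Finset.mem_univ, true_and] at hk
      exact Finset.mem_filter.2 ⟨hk, rfl⟩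
    · intro k1 _ k2 _ h
      exact colOf_injective (by simpa using congrArg Prod.snd h)
    · intro p hp
      obtain ⟨hpF, hp1⟩ := Finset.mem_filter.1 hp
      have hcs := colSum_pos (i := p.1) (j := p.2) (by rwa [Prod.mk.eta])
      have hb : 1 ≤ p.2 ∧ p.2 ≤ (n:ℤ) := by
        by_contra hb
        have := h1supp p.2 (by omega)
        omega
      obtain ⟨k, hk⟩ := exists_colOf (σ := σ) hb.1 hb.2
      refine ⟨k, ?_, ?_⟩
      · simp only [hK, Finset.mem_filter, Finset.mem_univ, true_and]
        have : (i, colOf σ k) = p := Prod.ext hp1.symm hk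
        rwa [this]
      · exact Prod.ext hp1.symm hk
  have hmem : k ∈ K ↔ (k : ℕ) < K.card := by
    constructor
    · intro hk
      have hsub : Finset.Iic k ⊆ K := fun l hl => hdc (Finset.mem_Iic.1 hl) hk
      have := Finset.card_le_card hsub
      rw [Fin.card_Iic] at this
      omega
    · intro hlt
      by_contra hk
      have hsub : K ⊆ Finset.Iio k := by
        intro l hl
        rw [Finset.mem_Iio]
        by_contra hlk
        exact hk (hdc (le_of_not_gt hlk) hl)
      have := Finset.card_le_card hsub
      rw [Fin.card_Iio] at this
      omega
  rw [← hcardK]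
  constructor
  · intro h
    have : k ∈ K := by simp [hK, h]
    exact_mod_cast hmem.1 this
  · intro h
    have : k ∈ K := hmem.2 (by exact_mod_cast h)
    simpa [hK] using this

end

lemma triangle_bound : ∀ (T : Finset ℕ), (∀ t ∈ T, 1 ≤ t) →
    T.card * (T.card + 1) ≤ 2 * ∑ t ∈ T, t := by
  intro T
  induction T using Finset.strongInduction with
  | _ T ih =>
    intro h1
    rcases T.eq_empty_or_nonempty with rfl | hne
    · simp
    · set m := T.max' hne with hm
      have hmT : m ∈ T := T.max'_mem hne
      have hcard : T.card ≤ m := by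
        have hsub : T ⊆ Finset.Icc 1 m := by
          intro t ht
          exact Finset.mem_Icc.2 ⟨h1 t ht, T.le_max' t ht⟩
        have := Finset.card_le_card hsub
        simpa [Nat.card_Icc] using this
      have hss : T.erase m ⊂ T := Finset.erase_ssubset hmT
      have hih := ih (T.erase m) hss (fun t ht => h1 t (Finset.mem_of_mem_erase ht))
      have hsum : ∑ t ∈ T, t = m + ∑ t ∈ T.erase m, t := (Finset.add_sum_erase _ _ hmT).symm
      have hcard2 : T.card = (T.erase m).card + 1 := by
        rw [Finset.card_erase_of_mem hmT]
        have : 0 < T.card := Finset.card_pos.2 hne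
        omega
      rw [hsum, hcard2]
      set e := (T.erase m).card
      have : e + 1 ≤ m := by omega
      nlinarith [hih]

section
variable {n : ℕ} (σ : Equiv.Perm (Fin n))

def kOf (hn : 0 < n) (j : ℤ) : Fin n := σ.symm ⟨(j-1).toNat % n, Nat.mod_lt _ hn⟩

lemma kOf_colOf (hn : 0 < n) (k : Fin n) : kOf σ hn (colOf σ k) = k := by
  unfold kOf colOf
  have h1 : ((((σ k : ℕ) : ℤ) + 1 - 1).toNat) = (σ k : ℕ) := by omega
  have h2 : (σ k : ℕ) % n = (σ k : ℕ) := Nat.mod_eq_of_lt (σ k).isLt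
  simp only [h1, h2]
  simp

lemma colOf_kOf (hn : 0 < n) {j : ℤ} (hj1 : 1 ≤ j) (hj2 : j ≤ (n:ℤ)) :
    colOf σ (kOf σ hn j) = j := by
  unfold kOf colOf
  have h2 : ((j-1).toNat) % n = (j-1).toNat := Nat.mod_eq_of_lt (by omega)
  simp only [h2]
  rw [Equiv.apply_symm_apply]
  simp
  omega
end

section Main
variable {n : ℕ} {σ : Equiv.Perm (Fin n)} {F1 F2 : Finset (ℤ × ℤ)}

/-- fiber count of a set in sorted column `k` -/
def cFib (F : Finset (ℤ × ℤ)) (σ : Equiv.Perm (Fin n)) (hn : 0 < n) (k : Fin n) : ℕ :=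
  (F.filter (fun p => kOf σ hn p.2 = k)).card

lemma snd_eq_colOf (hn : 0 < n)
    (hsupp : ∀ j : ℤ, j < 1 ∨ (n : ℤ) < j → colSum F2 j = 0)
    {p : ℤ × ℤ} (hp : p ∈ F2) : p.2 = colOf σ (kOf σ hn p.2) := by
  have hcs := colSum_pos (i := p.1) (j := p.2) (by rwa [Prod.mk.eta])
  have hb : 1 ≤ p.2 ∧ p.2 ≤ (n:ℤ) := by
    by_contra hb
    have := hsupp p.2 (by omega)
    omega
  exact (colOf_kOf σ hn hb.1 hb.2).symm

lemma key_count (hn : 0 < n)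
    (hS : ∀ (i : ℤ) (k : Fin n), (i, colOf σ k) ∈ F1 ↔ ((k : ℕ) : ℤ) < rowSum F1 i)
    (hrow : ∀ i, rowSum F1 i = rowSum F2 i)
    (h2supp : ∀ j : ℤ, j < 1 ∨ (n : ℤ) < j → colSum F2 j = 0)
    (h1supp : ∀ j : ℤ, j < 1 ∨ (n : ℤ) < j → colSum F1 j = 0) :
    ∃ a : ℤ, 0 ≤ a ∧ lineDiff F2 F1 = 2 * a ∧
      ∃ s : ℕ, ((F2 \ F1).card : ℤ) ≤ (s : ℤ) * a ∧ s * (s + 1) ≤ 2 * F2.card := by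
  classical
  set ρ : ℤ → ℕ := fun i => (F2.filter (fun p => p.1 = i)).card with hρ
  set c : Fin n → ℕ := cFib F2 σ hn with hc
  set v : Fin n → ℕ := cFib F1 σ hn with hv
  set I : Finset ℤ := F2.image Prod.fst with hI
  set T : Finset ℕ := I.image ρ with hT
  -- basic facts
  have hρ1 : ∀ i, (F1.filter (fun p => p.1 = i)).card = ρ i := by
    intro i
    have := hrow i
    unfold rowSum at this
    exact_mod_cast this
  have hsnd2 : ∀ {p : ℤ × ℤ}, p ∈ F2 → p.2 = colOf σ (kOf σ hn p.2) :=
    fun hp => snd_eq_colOf hn h2supp hp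
  have hsnd1 : ∀ {p : ℤ × ℤ}, p ∈ F1 → p.2 = colOf σ (kOf σ hn p.2) :=
    fun hp => snd_eq_colOf hn h1supp hp
  have hrowI : ∀ {i : ℤ}, 0 < ρ i → i ∈ I := by
    intro i h
    obtain ⟨p, hp⟩ := Finset.card_pos.1 h
    obtain ⟨hpF, hp1⟩ := Finset.mem_filter.1 hp
    exact Finset.mem_image.2 ⟨p, hpF, hp1⟩
  -- membership criterion
  have hcrit : ∀ {p : ℤ × ℤ}, p ∈ F2 → (p ∉ F1 ↔ ρ p.1 ≤ (kOf σ hn p.2 : ℕ)) := by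
    intro p hp
    have h2 := hsnd2 hp
    have := hS p.1 (kOf σ hn p.2)
    rw [← h2, Prod.mk.eta] at this
    rw [this, hrow p.1]
    have hr : rowSum F2 p.1 = ((ρ p.1 : ℕ) : ℤ) := rfl
    rw [hr]
    omega
  -- row membership in F1 in terms of ρ
  have hmem1 : ∀ (i : ℤ) (k : Fin n), (i, colOf σ k) ∈ F1 ↔ (k : ℕ) < ρ i := by
    intro i k
    rw [hS i k, hrow i]
    have hr : rowSum F2 i = ((ρ i : ℕ) : ℤ) := rfl
    rw [hr]
    omega
  -- step A : decompose d by row-sum value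
  have hsd : F2 \ F1 = F2.filter (fun p => p ∉ F1) := Finset.sdiff_eq_filter F2 F1
  have hA : (F2 \ F1).card = ∑ t ∈ T, (F2.filter (fun p => ρ p.1 = t ∧ p ∉ F1)).card := by
    rw [hsd, Finset.card_eq_sum_card_fiberwise (f := fun p => ρ p.1) (t := T)]
    · apply Finset.sum_congr rfl
      intro t _
      congr 1
      rw [Finset.filter_filter]
      apply Finset.filter_congr
      intro p _
      tauto
    · intro p hp
      have hpF := (Finset.mem_filter.1 hp).1
      have : p.1 ∈ I := Finset.mem_image.2 ⟨p, hpF, rfl⟩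
      exact Finset.mem_image.2 ⟨p.1, this, rfl⟩
  -- v k counts rows with ρ i > k
  have hvcard : ∀ k : Fin n, v k = (I.filter (fun i => (k : ℕ) < ρ i)).card := by
    intro k
    rw [hv]
    unfold cFib
    apply Finset.card_bij (fun p _ => p.1)
    · intro p hp
      obtain ⟨hpF, hpk⟩ := Finset.mem_filter.1 hp
      have h2 : p.2 = colOf σ k := by rw [hsnd1 hpF, hpk]
      have hmem : (p.1, colOf σ k) ∈ F1 := by
        have : p = (p.1, colOf σ k) := Prod.ext rfl h2
        rwa [this] at hpF
      have hlt : (k : ℕ) < ρ p.1 := (hmem1 p.1 k).1 hmem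
      exact Finset.mem_filter.2 ⟨hrowI (by omega), hlt⟩
    · intro p hp q hq hpq
      obtain ⟨hpF, hpk⟩ := Finset.mem_filter.1 hp
      obtain ⟨hqF, hqk⟩ := Finset.mem_filter.1 hq
      have : p.2 = q.2 := by rw [hsnd1 hpF, hsnd1 hqF, hpk, hqk]
      exact Prod.ext hpq this
    · intro i hi
      obtain ⟨hiI, hilt⟩ := Finset.mem_filter.1 hi
      have hmem : (i, colOf σ k) ∈ F1 := (hmem1 i k).2 hilt
      refine ⟨(i, colOf σ k), Finset.mem_filter.2 ⟨hmem, ?_⟩, rfl⟩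
      exact kOf_colOf σ hn k
  -- step B-F : bound each class
  have hBF : ∀ t : ℕ, ((F2.filter (fun p => ρ p.1 = t ∧ p ∉ F1)).card : ℤ) ≤
      ∑ k : Fin n, max ((c k : ℤ) - (v k : ℤ)) 0 := by
    intro t
    set Bt := F2.filter (fun p => ρ p.1 ≤ t ∧ t ≤ (kOf σ hn p.2).val) with hBt
    set Ct := F2.filter (fun p => t ≤ (kOf σ hn p.2).val) with hCt
    set Xt := F2.filter (fun p => t < ρ p.1 ∧ t ≤ (kOf σ hn p.2).val) with hXt
    set Kt := Finset.univ.filter (fun k : Fin n => t ≤ k.val) with hKt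
    have hEB : (F2.filter (fun p => ρ p.1 = t ∧ p ∉ F1)).card ≤ Bt.card := by
      apply Finset.card_le_card
      intro p hp
      obtain ⟨hpF, hpt, hpn⟩ := Finset.mem_filter.1 hp
      have := (hcrit hpF).1 hpn
      exact Finset.mem_filter.2 ⟨hpF, by omega, by omega⟩
    have hsplit : Bt.card + Xt.card = Ct.card := by
      have h := Finset.card_filter_add_card_filter_not
        (s := Ct) (p := fun p => ρ p.1 ≤ t)
      have e1 : Ct.filter (fun p => ρ p.1 ≤ t) = Bt := by
        ext p
        rw [hCt, hBt]
        simp only [Finset.mem_filter, Finset.filter_filter]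
        tauto
      have e2 : Ct.filter (fun p => ¬ ρ p.1 ≤ t) = Xt := by
        ext p
        rw [hCt, hXt]
        simp only [Finset.mem_filter, Finset.filter_filter, Nat.not_le]
        tauto
      rw [e1, e2] at h
      exact h
    have hCsum : Ct.card = ∑ k ∈ Kt, c k := by
      have hmt : ∀ p ∈ Ct, kOf σ hn p.2 ∈ Kt := by
        intro p hp
        rw [hKt]
        exact Finset.mem_filter.2 ⟨Finset.mem_univ _, (Finset.mem_filter.1 hp).2⟩
      rw [Finset.card_eq_sum_card_fiberwise hmt]
      apply Finset.sum_congr rfl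
      intro k hk
      have hkt : t ≤ k.val := (Finset.mem_filter.1 hk).2
      rw [hc]
      unfold cFib
      rw [hCt, Finset.filter_filter]
      congr 1
      apply Finset.filter_congr
      intro p _
      constructor
      · intro h; exact h.2
      · intro h
        refine ⟨?_, h⟩
        rw [h]
        exact hkt
    have hXsum : ∑ k ∈ Kt, v k ≤ Xt.card := by
      have hlhs : ∑ k ∈ Kt, v k = ∑ i ∈ I, (Kt.filter (fun k : Fin n => k.val < ρ i)).card := by
        calc ∑ k ∈ Kt, v k = ∑ k ∈ Kt, ∑ i ∈ I, (if k.val < ρ i then 1 else 0) := by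
              apply Finset.sum_congr rfl
              intro k _
              rw [hvcard k, Finset.card_filter]
          _ = ∑ i ∈ I, ∑ k ∈ Kt, (if k.val < ρ i then 1 else 0) := Finset.sum_comm
          _ = ∑ i ∈ I, (Kt.filter (fun k : Fin n => k.val < ρ i)).card := by
              apply Finset.sum_congr rfl
              intro i _
              rw [Finset.card_filter]
      have hrhs : Xt.card = ∑ i ∈ I, (Xt.filter (fun p => p.1 = i)).card := by
        apply Finset.card_eq_sum_card_fiberwise (f := fun p : ℤ × ℤ => p.1)
        intro p hp
        rw [hXt] at hp
        exact Finset.mem_image.2 ⟨p, (Finset.mem_filter.1 hp).1, rfl⟩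
      rw [hlhs, hrhs]
      apply Finset.sum_le_sum
      intro i _
      by_cases hti : t < ρ i
      · have ha : (Kt.filter (fun k : Fin n => k.val < ρ i)).card ≤ ρ i - t := by
          have hmaps : ∀ k ∈ Kt.filter (fun k : Fin n => k.val < ρ i),
              k.val ∈ Finset.Ico t (ρ i) := by
            intro k hk
            obtain ⟨hk1, hk2⟩ := Finset.mem_filter.1 hk
            rw [hKt] at hk1
            exact Finset.mem_Ico.2 ⟨(Finset.mem_filter.1 hk1).2, hk2⟩
          have hinj : Set.InjOn (fun k : Fin n => k.val)
              ↑(Kt.filter (fun k : Fin n => k.val < ρ i)) :=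
            fun p _ q _ h => Fin.ext h
          have := Finset.card_le_card_of_injOn _ hmaps hinj
          rwa [Nat.card_Ico] at this
        have hb : ρ i - t ≤ (Xt.filter (fun p => p.1 = i)).card := by
          set row := F2.filter (fun p => p.1 = i) with hrowdef
          have hrc : row.card = ρ i := rfl
          have hsp := Finset.card_filter_add_card_filter_not
            (s := row) (p := fun p => t ≤ (kOf σ hn p.2).val)
          have hY : (row.filter (fun p => ¬ t ≤ (kOf σ hn p.2).val)).card ≤ t := by
            have hmaps : ∀ p ∈ row.filter (fun p => ¬ t ≤ (kOf σ hn p.2).val),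
                (kOf σ hn p.2).val ∈ Finset.range t := by
              intro p hp
              have := (Finset.mem_filter.1 hp).2
              exact Finset.mem_range.2 (by omega)
            have hinj : Set.InjOn (fun p : ℤ × ℤ => (kOf σ hn p.2).val)
                ↑(row.filter (fun p => ¬ t ≤ (kOf σ hn p.2).val)) := by
              intro p hp q hq h
              simp only [Finset.coe_filter, Set.mem_setOf_eq, hrowdef,
                Finset.mem_filter] at hp hq
              have hpF : p ∈ F2 := hp.1.1
              have hqF : q ∈ F2 := hq.1.1
              have h2 : p.2 = q.2 := by
                rw [hsnd2 hpF, hsnd2 hqF]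
                congr 1
                exact Fin.ext h
              exact Prod.ext (hp.1.2.trans hq.1.2.symm) h2
            have := Finset.card_le_card_of_injOn _ hmaps hinj
            simpa using this
          have hZ : row.filter (fun p => t ≤ (kOf σ hn p.2).val) =
              Xt.filter (fun p => p.1 = i) := by
            ext p
            rw [hrowdef, hXt]
            simp only [Finset.filter_filter, Finset.mem_filter]
            constructor
            · rintro ⟨h0, h1, h2⟩
              exact ⟨h0, ⟨by rw [h1]; exact hti, h2⟩, h1⟩
            · rintro ⟨h0, ⟨_, h2⟩, h3⟩
              exact ⟨h0, h3, h2⟩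
          rw [hZ] at hsp
          omega
        omega
      · have hempty : Kt.filter (fun k : Fin n => k.val < ρ i) = ∅ := by
          apply Finset.filter_false_of_mem
          intro k hk
          rw [hKt] at hk
          have := (Finset.mem_filter.1 hk).2
          omega
        rw [hempty]
        simp
    calc ((F2.filter (fun p => ρ p.1 = t ∧ p ∉ F1)).card : ℤ) ≤ (Bt.card : ℤ) := by
          exact_mod_cast hEB
      _ ≤ ∑ k ∈ Kt, ((c k : ℤ) - (v k : ℤ)) := by
          rw [Finset.sum_sub_distrib]
          have h1 : (Ct.card : ℤ) = ∑ k ∈ Kt, (c k : ℤ) := by exact_mod_cast hCsum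
          have h2 : (∑ k ∈ Kt, (v k : ℤ)) ≤ (Xt.card : ℤ) := by exact_mod_cast hXsum
          omega
      _ ≤ ∑ k ∈ Kt, max ((c k : ℤ) - (v k : ℤ)) 0 :=
          Finset.sum_le_sum (fun k _ => le_max_left _ _)
      _ ≤ ∑ k : Fin n, max ((c k : ℤ) - (v k : ℤ)) 0 := by
          apply Finset.sum_le_sum_of_subset_of_nonneg (Finset.filter_subset _ _)
          intro k _ _
          exact le_max_right _ _
  -- the alpha value
  set A : ℤ := ∑ k : Fin n, max ((c k : ℤ) - (v k : ℤ)) 0 with hAdef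
  have hAnn : 0 ≤ A := Finset.sum_nonneg (fun k _ => le_max_right _ _)
  -- step G : global bound
  have hG : ((F2 \ F1).card : ℤ) ≤ (T.card : ℤ) * A := by
    calc ((F2 \ F1).card : ℤ)
        = ∑ t ∈ T, ((F2.filter (fun p => ρ p.1 = t ∧ p ∉ F1)).card : ℤ) := by
          rw [hA]; push_cast; rfl
      _ ≤ ∑ _t ∈ T, A := Finset.sum_le_sum (fun t _ => hBF t)
      _ = (T.card : ℤ) * A := by rw [Finset.sum_const, nsmul_eq_mul]
  -- fibers equal colSums
  have hcc : ∀ k : Fin n, (c k : ℤ) = colSum F2 (colOf σ k) := by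
    intro k
    rw [hc]
    unfold cFib colSum
    congr 2
    ext p
    simp only [Finset.mem_filter]
    constructor
    · rintro ⟨hpF, hpk⟩
      exact ⟨hpF, by rw [hsnd2 hpF, hpk]⟩
    · rintro ⟨hpF, hpk⟩
      exact ⟨hpF, by rw [hpk, kOf_colOf σ hn k]⟩
  have hvv : ∀ k : Fin n, (v k : ℤ) = colSum F1 (colOf σ k) := by
    intro k
    rw [hv]
    unfold cFib colSum
    congr 2
    ext p
    simp only [Finset.mem_filter]
    constructor
    · rintro ⟨hpF, hpk⟩
      exact ⟨hpF, by rw [hsnd1 hpF, hpk]⟩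
    · rintro ⟨hpF, hpk⟩
      exact ⟨hpF, by rw [hpk, kOf_colOf σ hn k]⟩
  -- total cards
  have hc2 : ∑ k : Fin n, c k = F2.card := by
    symm
    apply Finset.card_eq_sum_card_fiberwise (f := fun p : ℤ × ℤ => kOf σ hn p.2)
    intro p _
    exact Finset.mem_univ _
  have hv1 : ∑ k : Fin n, v k = F1.card := by
    symm
    apply Finset.card_eq_sum_card_fiberwise (f := fun p : ℤ × ℤ => kOf σ hn p.2)
    intro p _
    exact Finset.mem_univ _
  have hmemI1 : ∀ {p : ℤ × ℤ}, p ∈ F1 → p.1 ∈ I := by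
    intro p hp
    apply hrowI
    rw [← hρ1 p.1]
    exact Finset.card_pos.2 ⟨p, Finset.mem_filter.2 ⟨hp, rfl⟩⟩
  have hcard12 : F1.card = F2.card := by
    have h1 : F1.card = ∑ i ∈ I, (F1.filter (fun p => p.1 = i)).card :=
      Finset.card_eq_sum_card_fiberwise (f := fun p : ℤ × ℤ => p.1)
        (fun p hp => hmemI1 hp)
    have h2 : F2.card = ∑ i ∈ I, (F2.filter (fun p => p.1 = i)).card :=
      Finset.card_eq_sum_card_fiberwise (f := fun p : ℤ × ℤ => p.1)
        (fun p hp => Finset.mem_image.2 ⟨p, hp, rfl⟩)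
    rw [h1, h2]
    exact Finset.sum_congr rfl (fun i _ => hρ1 i)
  have hsumeq : ∑ k : Fin n, (c k : ℤ) = ∑ k : Fin n, (v k : ℤ) := by
    have : ∑ k : Fin n, c k = ∑ k : Fin n, v k := by rw [hc2, hv1, hcard12]
    exact_mod_cast this
  -- lineDiff = 2 * A
  have hLD : lineDiff F2 F1 = 2 * A := by
    unfold lineDiff
    have hrowzero : ∑ i ∈ (F2 ∪ F1).image Prod.fst, |rowSum F2 i - rowSum F1 i| = 0 := by
      apply Finset.sum_eq_zero
      intro i _
      rw [hrow i]
      simp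
    rw [hrowzero, add_zero]
    set J : Finset ℤ := Finset.univ.image (fun k : Fin n => colOf σ k) with hJ
    have hsubJ : (F2 ∪ F1).image Prod.snd ⊆ J := by
      intro j hj
      obtain ⟨p, hp, hpj⟩ := Finset.mem_image.1 hj
      rcases Finset.mem_union.1 hp with hp2 | hp1
      · exact Finset.mem_image.2 ⟨kOf σ hn j, Finset.mem_univ _, by rw [← hpj, ← hsnd2 hp2]⟩
      · exact Finset.mem_image.2 ⟨kOf σ hn j, Finset.mem_univ _, by rw [← hpj, ← hsnd1 hp1]⟩
    have hzero : ∀ j ∈ J, j ∉ (F2 ∪ F1).image Prod.snd →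
        |colSum F2 j - colSum F1 j| = 0 := by
      intro j _ hj
      have hz : ∀ F : Finset (ℤ × ℤ), F ⊆ F2 ∪ F1 → colSum F j = 0 := by
        intro F hF
        unfold colSum
        norm_cast
        rw [Finset.card_eq_zero, Finset.filter_eq_empty_iff]
        intro p hp hpj
        exact hj (Finset.mem_image.2 ⟨p, hF hp, hpj⟩)
      rw [hz F2 Finset.subset_union_left, hz F1 Finset.subset_union_right]
      simp
    have hstep : ∑ j ∈ (F2 ∪ F1).image Prod.snd, |colSum F2 j - colSum F1 j|
        = ∑ j ∈ J, |colSum F2 j - colSum F1 j| :=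
      Finset.sum_subset hsubJ hzero
    have hstep2 : ∑ j ∈ J, |colSum F2 j - colSum F1 j|
        = ∑ k : Fin n, |(c k : ℤ) - (v k : ℤ)| := by
      rw [hJ, Finset.sum_image (fun x _ y _ h => colOf_injective h)]
      apply Finset.sum_congr rfl
      intro k _
      rw [hcc k, hvv k]
    rw [hstep, hstep2]
    have hswap : ∑ k : Fin n, max ((v k : ℤ) - (c k : ℤ)) 0 = A := by
      have h0 : ∑ k : Fin n, (max ((c k : ℤ) - (v k : ℤ)) 0 - max ((v k : ℤ) - (c k : ℤ)) 0)
          = ∑ k : Fin n, ((c k : ℤ) - (v k : ℤ)) := by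
        apply Finset.sum_congr rfl
        intro k _
        omega
      rw [Finset.sum_sub_distrib, Finset.sum_sub_distrib] at h0
      rw [hAdef]
      omega
    have habs : ∑ k : Fin n, |(c k : ℤ) - (v k : ℤ)|
        = A + ∑ k : Fin n, max ((v k : ℤ) - (c k : ℤ)) 0 := by
      rw [hAdef, ← Finset.sum_add_distrib]
      apply Finset.sum_congr rfl
      intro k _
      rcases le_total ((c k : ℤ)) ((v k : ℤ)) with h | h
      · rw [abs_of_nonpos (by omega)]
        omega
      · rw [abs_of_nonneg (by omega)]
        omega
    rw [habs, hswap]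
    ring
  -- sum over T bounded by total
  have hT1 : ∀ t ∈ T, 1 ≤ t := by
    intro t ht
    obtain ⟨i, hi, hit⟩ := Finset.mem_image.1 ht
    obtain ⟨p, hp, hpi⟩ := Finset.mem_image.1 hi
    have : 0 < ρ i := Finset.card_pos.2 ⟨p, Finset.mem_filter.2 ⟨hp, hpi⟩⟩
    omega
  have hTsum : ∑ t ∈ T, t ≤ F2.card := by
    have h2 : F2.card = ∑ i ∈ I, (F2.filter (fun p => p.1 = i)).card :=
      Finset.card_eq_sum_card_fiberwise (f := fun p : ℤ × ℤ => p.1)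
        (fun p hp => Finset.mem_image.2 ⟨p, hp, rfl⟩)
    have h3 : ∑ i ∈ I, ρ i = ∑ t ∈ T, ∑ i ∈ I.filter (fun i => ρ i = t), ρ i :=
      (Finset.sum_fiberwise_of_maps_to (fun i hi => Finset.mem_image.2 ⟨i, hi, rfl⟩) ρ).symm
    have h4 : ∀ t ∈ T, t ≤ ∑ i ∈ I.filter (fun i => ρ i = t), ρ i := by
      intro t ht
      obtain ⟨i, hi, hit⟩ := Finset.mem_image.1 ht
      have hifib : i ∈ I.filter (fun i => ρ i = t) := Finset.mem_filter.2 ⟨hi, hit⟩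
      calc t = ρ i := hit.symm
        _ ≤ ∑ i ∈ I.filter (fun i => ρ i = t), ρ i :=
            Finset.single_le_sum (fun _ _ => Nat.zero_le _) hifib
    calc ∑ t ∈ T, t ≤ ∑ t ∈ T, ∑ i ∈ I.filter (fun i => ρ i = t), ρ i :=
          Finset.sum_le_sum h4
      _ = ∑ i ∈ I, ρ i := h3.symm
      _ = F2.card := h2.symm
  have htri := triangle_bound T hT1
  exact ⟨A, hAnn, hLD, T.card, hG, by omega⟩
end Main


/-- If `F2` is nonempty and `F1` is a uniquely determined neighbour of `F2`, then with
`α = α(F2, F1)` we have `|F2 ∩ F1| / |F2| ≥ 1 − √2·α / √|F2|`. -/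
theorem inter_card_ratio_ge (F2 F1 : Finset (ℤ × ℤ)) (hF2 : F2.Nonempty)
    (hnb : udNeighbour F1 F2) :
    1 - Real.sqrt 2 * alpha F2 F1 / Real.sqrt F2.card ≤
      ((F2 ∩ F1).card : ℝ) / F2.card := by
  classical
  obtain ⟨hud, hrow, n, h2supp, h1supp, σ, hsort2, hsort1⟩ := hnb
  have hn : 0 < n := by
    by_contra hn0
    obtain ⟨p, hp⟩ := hF2
    have hcs := colSum_pos (i := p.1) (j := p.2) (by rwa [Prod.mk.eta])
    have := h2supp p.2 (by omega)
    omega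
  have hS := staircase hud h1supp hsort1
  obtain ⟨a, hAnn, hLD, s, hG, hTri⟩ := key_count hn hS hrow h2supp h1supp
  set N : ℕ := F2.card with hNdef
  have hNpos : 0 < N := Finset.card_pos.2 hF2
  have hNR : (0:ℝ) < (N:ℝ) := by exact_mod_cast hNpos
  have hsN : (0:ℝ) < Real.sqrt N := Real.sqrt_pos.2 hNR
  have hinter : (F2 \ F1).card + (F2 ∩ F1).card = N := Finset.card_sdiff_add_card_inter F2 F1
  have hal : alpha F2 F1 = (a : ℝ) := by
    unfold alpha
    rw [hLD]
    push_cast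
    ring
  have haR : (0:ℝ) ≤ (a:ℝ) := by exact_mod_cast hAnn
  -- s ≤ √2 √N
  have hs2 : ((s:ℝ)) ≤ Real.sqrt 2 * Real.sqrt N := by
    have h2N : ((s:ℝ))^2 ≤ 2 * (N:ℝ) := by
      have h1 : (s * (s+1) : ℝ) ≤ 2 * N := by exact_mod_cast hTri
      nlinarith [h1]
    calc (s:ℝ) = Real.sqrt ((s:ℝ)^2) := (Real.sqrt_sq (by positivity)).symm
      _ ≤ Real.sqrt (2 * N) := Real.sqrt_le_sqrt h2N
      _ = Real.sqrt 2 * Real.sqrt N := Real.sqrt_mul (by norm_num) _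
  have hD : ((F2 \ F1).card : ℝ) ≤ Real.sqrt 2 * Real.sqrt N * (a:ℝ) := by
    calc ((F2 \ F1).card : ℝ) ≤ (s:ℝ) * (a:ℝ) := by exact_mod_cast hG
      _ ≤ Real.sqrt 2 * Real.sqrt N * (a:ℝ) := mul_le_mul_of_nonneg_right hs2 haR
  have hKN : ((F2 ∩ F1).card : ℝ) = (N:ℝ) - ((F2 \ F1).card : ℝ) := by
    have : ((F2 \ F1).card : ℝ) + ((F2 ∩ F1).card : ℝ) = (N:ℝ) := by exact_mod_cast hinter
    linarith
  have hNs : (N:ℝ) = Real.sqrt N * Real.sqrt N := (Real.mul_self_sqrt hNR.le).symm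
  have hsNne : Real.sqrt N ≠ 0 := ne_of_gt hsN
  have e3 : Real.sqrt 2 * Real.sqrt N * (a:ℝ) / (N:ℝ) = Real.sqrt 2 * (a:ℝ) / Real.sqrt N := by
    rw [div_eq_div_iff hNR.ne' hsN.ne']
    calc Real.sqrt 2 * Real.sqrt N * (a:ℝ) * Real.sqrt N
        = Real.sqrt 2 * (a:ℝ) * (Real.sqrt N * Real.sqrt N) := by ring
      _ = Real.sqrt 2 * (a:ℝ) * (N:ℝ) := by rw [Real.mul_self_sqrt hNR.le]
  rw [hal, hKN]
  have hdivle : ((F2 \ F1).card : ℝ) / (N:ℝ) ≤ Real.sqrt 2 * Real.sqrt N * (a:ℝ) / (N:ℝ) := by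
    exact div_le_div_of_nonneg_right hD hNR.le
  rw [e3] at hdivle
  have expand : ((N:ℝ) - ((F2 \ F1).card : ℝ)) / (N:ℝ) = 1 - ((F2 \ F1).card : ℝ) / (N:ℝ) := by
    field_simp
  rw [expand]
  linarith
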